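/- Swap rate volatility identity: let V be a real vector space, let i < j be integers, let p_i, p_{i+1}, …, p_j be strictly positive real numbers with p_i ≠ p_j, let τ_i, …, τ_{j−1} be strictly positive real numbers, and let ζ_i, …, ζ_j ∈ V. Set p_ν := Σ_{k=i}^{j−1} τ_k·p_{k+1}, p̂_m := p_m/p_ν for m = i, …, j, and p_μ := p_i − p_j. Then p̂_i·Σ_{k=i}^{j−1} τ_k·p̂_{k+1}·(ζ_i − ζ_{k+1}) − p̂_j·Σ_{k=i}^{j−1} τ_k·p̂_{k+1}·(ζ_j − ζ_{k+1}) = (p_μ/p_ν)·[ (p_j/p_μ)·(ζ_i − ζ_j) + Σ_{k=i}^{j−1} τ_k·(p_{k+1}/p_ν)·(ζ_i − ζ_{k+1}) ]. (This identifies the integrated volatility ∫ σ̂_t(P̂_t, y) μ(dy) of the forward swap numeraire dynamics, for μ = δ_{T_i} − δ_{T_j} and ν = Σ_{k=i}^{j−1} τ_k δ_{T_{k+1}}, with the swap rate X̂ = p_μ/p_ν times the LIBOR swap rate volatility σ̂(t) of equation (36) of the paper.) -/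

import Mathlib

open Finset

/-- Swap rate volatility identity: with bond prices `p i, …, p j > 0`, tenor lengths
`τ i, …, τ (j-1) > 0`, bond volatilities `ζ i, …, ζ j` in a real vector space `V`,
annuity numeraire `pν = ∑_{k=i}^{j-1} τ k · p (k+1)`, forward bond prices
`phat n = p n / pν` and `pμ = p i − p j`, one has
`phat i • ∑ τ k · phat (k+1) • (ζ i − ζ (k+1)) − phat j • ∑ τ k · phat (k+1) • (ζ j − ζ (k+1))
  = (pμ/pν) • ((p j/pμ) • (ζ i − ζ j) + ∑ (τ k · p (k+1)/pν) • (ζ i − ζ (k+1)))`. -/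
theorem swap_rate_volatility_identity {V : Type*} [AddCommGroup V] [Module ℝ V]
    {i j : ℕ} (hij : i < j) (p τ : ℕ → ℝ) (ζ : ℕ → V)
    (hp : ∀ k ∈ Finset.Icc i j, 0 < p k) (hpij : p i ≠ p j)
    (hτ : ∀ k ∈ Finset.Ico i j, 0 < τ k)
    (pν : ℝ) (hpν : pν = ∑ k ∈ Finset.Ico i j, τ k * p (k+1))
    (phat : ℕ → ℝ) (hphat : ∀ n, phat n = p n / pν)
    (pμ : ℝ) (hpμ : pμ = p i - p j) :
    phat i • (∑ k ∈ Finset.Ico i j, (τ k * phat (k+1)) • (ζ i - ζ (k+1)))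
      - phat j • (∑ k ∈ Finset.Ico i j, (τ k * phat (k+1)) • (ζ j - ζ (k+1)))
    = (pμ / pν) • ((p j / pμ) • (ζ i - ζ j)
        + ∑ k ∈ Finset.Ico i j, (τ k * (p (k+1) / pν)) • (ζ i - ζ (k+1))) := by
  have hν0 : 0 < pν := by
    rw [hpν]
    apply Finset.sum_pos
    · intro k hk
      have hk' : k + 1 ∈ Finset.Icc i j := by
        simp only [Finset.mem_Ico] at hk
        simp only [Finset.mem_Icc]
        omega
      exact mul_pos (hτ k hk) (hp _ hk')
    · exact Finset.nonempty_Ico.mpr hij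
  have hνne : pν ≠ 0 := ne_of_gt hν0
  have hμne : pμ ≠ 0 := by rw [hpμ]; exact sub_ne_zero.mpr hpij
  set S : V := ∑ k ∈ Finset.Ico i j, (τ k * (p (k+1) / pν)) • (ζ i - ζ (k+1)) with hS
  set D : V := ζ i - ζ j with hD
  have h1 : ∑ k ∈ Finset.Ico i j, (τ k * phat (k+1)) • (ζ i - ζ (k+1)) = S := by
    simp [hS, hphat]
  have hsum1 : ∑ k ∈ Finset.Ico i j, τ k * phat (k+1) = 1 := by
    have : ∑ k ∈ Finset.Ico i j, τ k * phat (k+1)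
        = (∑ k ∈ Finset.Ico i j, τ k * p (k+1)) / pν := by
      rw [Finset.sum_div]
      exact Finset.sum_congr rfl fun k _ => by rw [hphat]; ring
    rw [this, ← hpν, div_self hνne]
  have h2 : ∑ k ∈ Finset.Ico i j, (τ k * phat (k+1)) • (ζ j - ζ (k+1)) = S - D := by
    have : ∀ k, ζ j - ζ (k+1) = (ζ i - ζ (k+1)) - D := by
      intro k; rw [hD]; abel
    calc ∑ k ∈ Finset.Ico i j, (τ k * phat (k+1)) • (ζ j - ζ (k+1))
        = ∑ k ∈ Finset.Ico i j, ((τ k * phat (k+1)) • (ζ i - ζ (k+1))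
            - (τ k * phat (k+1)) • D) := by
          refine Finset.sum_congr rfl fun k _ => ?_
          rw [this k, smul_sub]
      _ = S - (∑ k ∈ Finset.Ico i j, τ k * phat (k+1)) • D := by
          rw [Finset.sum_sub_distrib, h1, Finset.sum_smul]
      _ = S - D := by rw [hsum1, one_smul]
  rw [h1, h2, hphat i, hphat j]
  have hμ' : p i - p j ≠ 0 := sub_ne_zero.mpr hpij
  match_scalars
  all_goals (rw [hpμ]; field_simp; try ring)
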